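/- Projection Theorem: for a guaranteed scoring game G with birthday n, (1) G_min ≼ G ≼ G_max, and (2) min(G) − n̂ ≼ G ≼ max(G) + n̂, where G_x is G with every atom replaced by ∅^x, max(G) and min(G) are the maximum and minimum atom values in G, and scores/numbers s denote the game ⟨∅^s|∅^s⟩. -/

import Mathlib

/-- A scoring game: `la`/`ra` are the atom values (relevant when the
corresponding option list is empty), `L`/`R` the Left and Right options. -/
inductive SG : Type
  | mk (la ra : ℝ) (L R : List SG) : SG

namespace SG

theorem sizeOf_lt_of_mem {g : SG} {l : List SG} (h : g ∈ l) : sizeOf g < sizeOf l :=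
  List.sizeOf_lt_of_mem h

noncomputable instance : DecidableEq SG := Classical.decEq _

def la : SG → ℝ | mk a _ _ _ => a
def ra : SG → ℝ | mk _ b _ _ => b
def L : SG → List SG | mk _ _ l _ => l
def R : SG → List SG | mk _ _ _ r => r

/-- The list of atom values occurring in atomic followers of a game. -/
def atomList : SG → List ℝ
  | mk a b ls rs =>
    (if ls.isEmpty then [a] else (ls.attach.map (fun x => atomList x.1)).flatten)
    ++ (if rs.isEmpty then [b] else (rs.attach.map (fun x => atomList x.1)).flatten)
decreasing_by all_goals (simp only [SG.mk.sizeOf_spec]; (first | (have := sizeOf_lt_of_mem x.2) | (have := sizeOf_lt_of_mem (by assumption : x ∈ _))); omega)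

/-- The guaranteed condition. -/
def Guaranteed : SG → Prop
  | mk a b ls rs =>
    (∀ x ∈ ls, Guaranteed x) ∧ (∀ x ∈ rs, Guaranteed x) ∧
    (ls = [] → ∀ s ∈ (mk a b ls rs).atomList, a ≤ s) ∧
    (rs = [] → ∀ s ∈ (mk a b ls rs).atomList, s ≤ b)
decreasing_by all_goals (simp only [SG.mk.sizeOf_spec]; (first | (have := sizeOf_lt_of_mem x.2) | (have := sizeOf_lt_of_mem (by assumption : x ∈ _))); omega)

/-- Disjunctive sum. -/
noncomputable def add : SG → SG → SG
  | mk a1 b1 L1 R1, mk a2 b2 L2 R2 =>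
    mk (a1 + a2) (b1 + b2)
      (L1.attach.map (fun x => add x.1 (mk a2 b2 L2 R2))
        ++ L2.attach.map (fun x => add (mk a1 b1 L1 R1) x.1))
      (R1.attach.map (fun x => add x.1 (mk a2 b2 L2 R2))
        ++ R2.attach.map (fun x => add (mk a1 b1 L1 R1) x.1))
termination_by g h => sizeOf g + sizeOf h
decreasing_by all_goals (simp only [SG.mk.sizeOf_spec]; (first | (have := sizeOf_lt_of_mem x.2) | (have := sizeOf_lt_of_mem (by assumption : x ∈ _))); omega)

/-- Left- and Right-stops (as a pair). -/
noncomputable def stops : SG → ℝ × ℝ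
  | mk a b ls rs =>
    (if ls.isEmpty then a else (WithBot.unbotD 0 (ls.attach.map (fun x => (stops x.1).2)).maximum),
     if rs.isEmpty then b else (WithTop.untopD 0 (rs.attach.map (fun x => (stops x.1).1)).minimum))
decreasing_by all_goals (simp only [SG.mk.sizeOf_spec]; (first | (have := sizeOf_lt_of_mem x.2) | (have := sizeOf_lt_of_mem (by assumption : x ∈ _))); omega)

noncomputable def Ls (g : SG) : ℝ := g.stops.1
noncomputable def Rs (g : SG) : ℝ := g.stops.2

/-- The conjugate: interchange Left and Right and negate atoms. -/
noncomputable def conj : SG → SG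
  | mk a b ls rs =>
    mk (-b) (-a) (rs.attach.map (fun x => conj x.1)) (ls.attach.map (fun x => conj x.1))
decreasing_by all_goals (simp only [SG.mk.sizeOf_spec]; (first | (have := sizeOf_lt_of_mem x.2) | (have := sizeOf_lt_of_mem (by assumption : x ∈ _))); omega)

/-- The game ⟨∅^s | ∅^s⟩ of a real number `s`. -/
def num (s : ℝ) : SG := mk s s [] []

/-- The zero game ⟨∅^0 | ∅^0⟩. -/
def zero : SG := num 0

/-- Waiting moves: the image of the Normal-play integer `n`. -/
def wait : ℕ → SG
  | 0 => zero
  | n + 1 => mk 0 0 [wait n] []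

/-- Birthday: the depth of the game tree. -/
def birthday : SG → ℕ
  | mk _ _ ls rs =>
    max (WithBot.unbotD 0 (ls.attach.map (fun x => birthday x.1 + 1)).maximum)
        (WithBot.unbotD 0 (rs.attach.map (fun x => birthday x.1 + 1)).maximum)
decreasing_by all_goals (simp only [SG.mk.sizeOf_spec]; (first | (have := sizeOf_lt_of_mem x.2) | (have := sizeOf_lt_of_mem (by assumption : x ∈ _))); omega)

/-- `Ge G H` is the order `G ≽ H`. -/
def Ge (G H : SG) : Prop :=
  ∀ X : SG, X.Guaranteed → Ls (G.add X) ≥ Ls (H.add X) ∧ Rs (G.add X) ≥ Rs (H.add X)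

/-- Equivalence `G ∼ H`. -/
def Equiv (G H : SG) : Prop := Ge G H ∧ Ge H G

/-- Right's pass-allowed Left-stop `L̲s(G) = min_n Ls(G - n̂)`. -/
noncomputable def lsU (G : SG) : ℝ := ⨅ n : ℕ, Ls (G.add (wait n).conj)

/-- Left's pass-allowed Right-stop `R̄s(G) = max_n Rs(G + n̂)`. -/
noncomputable def rsO (G : SG) : ℝ := ⨆ n : ℕ, Rs (G.add (wait n))

/-- `L̄s(G) = max_n Ls(G + n̂)`. -/
noncomputable def lsO (G : SG) : ℝ := ⨆ n : ℕ, Ls (G.add (wait n))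

/-- `R̲s(G) = min_n Rs(G + n̂)`. -/
noncomputable def rsU (G : SG) : ℝ := ⨅ n : ℕ, Rs (G.add (wait n))

/-- Identity of games: same tree structure (up to reordering of options),
with identical atoms at atomic positions. -/
def Ident : SG → SG → Prop
  | mk a1 b1 L1 R1, mk a2 b2 L2 R2 =>
    (L1 = [] ↔ L2 = []) ∧ (L1 = [] → a1 = a2) ∧
    (R1 = [] ↔ R2 = []) ∧ (R1 = [] → b1 = b2) ∧
    (∀ x ∈ L1, ∃ y : {z // z ∈ L2}, Ident x y.1) ∧
    (∀ y ∈ L2, ∃ x : {z // z ∈ L1}, Ident x.1 y) ∧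
    (∀ x ∈ R1, ∃ y : {z // z ∈ R2}, Ident x y.1) ∧
    (∀ y ∈ R2, ∃ x : {z // z ∈ R1}, Ident x.1 y)
termination_by g h => sizeOf g
decreasing_by all_goals (simp only [SG.mk.sizeOf_spec]; (first | (have := sizeOf_lt_of_mem x.2) | (have := sizeOf_lt_of_mem (by assumption : x ∈ _))); omega)

/-- `Linked H G`: `H` is linked to `G` (by some guaranteed `T`). -/
def Linked (H G : SG) : Prop :=
  ∃ T : SG, T.Guaranteed ∧ Ls (H.add T) < 0 ∧ 0 < Rs (G.add T)

/-- Replace every atom of `G` by `∅^x`. -/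
def subst (v : ℝ) : SG → SG
  | mk _ _ ls rs =>
    mk v v (ls.attach.map (fun x => subst v x.1)) (rs.attach.map (fun x => subst v x.1))
decreasing_by all_goals (simp only [SG.mk.sizeOf_spec]; (first | (have := sizeOf_lt_of_mem x.2) | (have := sizeOf_lt_of_mem (by assumption : x ∈ _))); omega)

/-- The maximum atom value in `G`. -/
noncomputable def maxAtom (G : SG) : ℝ := WithBot.unbotD 0 G.atomList.maximum

/-- The minimum atom value in `G`. -/
noncomputable def minAtom (G : SG) : ℝ := WithTop.untopD 0 G.atomList.minimum

theorem eta (g : SG) : mk g.la g.ra g.L g.R = g := by cases g; rfl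

theorem stops_def (a b : ℝ) (ls rs : List SG) : stops (mk a b ls rs) =
    (if ls.isEmpty then a else (WithBot.unbotD 0 (ls.attach.map (fun x => (stops x.1).2)).maximum),
     if rs.isEmpty then b else (WithTop.untopD 0 (rs.attach.map (fun x => (stops x.1).1)).minimum)) := by
  rw [stops]

theorem add_def (a1 b1 a2 b2 : ℝ) (L1 R1 L2 R2 : List SG) :
    add (mk a1 b1 L1 R1) (mk a2 b2 L2 R2) =
    mk (a1 + a2) (b1 + b2)
      (L1.attach.map (fun x => add x.1 (mk a2 b2 L2 R2))
        ++ L2.attach.map (fun x => add (mk a1 b1 L1 R1) x.1))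
      (R1.attach.map (fun x => add x.1 (mk a2 b2 L2 R2))
        ++ R2.attach.map (fun x => add (mk a1 b1 L1 R1) x.1)) := by
  rw [add]

theorem guaranteed_def (a b : ℝ) (ls rs : List SG) : Guaranteed (mk a b ls rs) ↔
    ((∀ x ∈ ls, Guaranteed x) ∧ (∀ x ∈ rs, Guaranteed x) ∧
    (ls = [] → ∀ s ∈ (mk a b ls rs).atomList, a ≤ s) ∧
    (rs = [] → ∀ s ∈ (mk a b ls rs).atomList, s ≤ b)) := by
  rw [Guaranteed]

theorem atomList_def (a b : ℝ) (ls rs : List SG) : atomList (mk a b ls rs) =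
    (if ls.isEmpty then [a] else (ls.attach.map (fun x => atomList x.1)).flatten)
    ++ (if rs.isEmpty then [b] else (rs.attach.map (fun x => atomList x.1)).flatten) := by
  rw [atomList]

theorem birthday_def (a b : ℝ) (ls rs : List SG) : birthday (mk a b ls rs) =
    max (WithBot.unbotD 0 (ls.attach.map (fun x => birthday x.1 + 1)).maximum)
        (WithBot.unbotD 0 (rs.attach.map (fun x => birthday x.1 + 1)).maximum) := by
  rw [birthday]

theorem subst_def (v a b : ℝ) (ls rs : List SG) : subst v (mk a b ls rs) =
    mk v v (ls.attach.map (fun x => subst v x.1)) (rs.attach.map (fun x => subst v x.1)) := by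
  rw [subst]

-- list helpers
theorem le_max_unbot' {α : Type*} [LinearOrder α] (d : α) {l : List α} {x : α} (hx : x ∈ l) :
    x ≤ WithBot.unbotD d l.maximum := by
  have h := List.le_maximum_of_mem' hx
  cases hm : l.maximum with
  | bot => rw [hm] at h; exact absurd h (by simp)
  | coe M => rw [hm] at h; simpa [hm] using h

theorem max_unbot'_le {α : Type*} [LinearOrder α] (d : α) {l : List α} {c : α}
    (hne : l ≠ []) (h : ∀ x ∈ l, x ≤ c) : WithBot.unbotD d l.maximum ≤ c := by
  have h2 : l.maximum ≤ (c : WithBot α) := List.maximum_le_of_forall_le (by exact_mod_cast h)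
  cases hm : l.maximum with
  | bot => exact absurd (List.maximum_eq_bot.mp hm) hne
  | coe M => rw [hm] at h2; simpa [hm] using h2

theorem min_untop'_le {α : Type*} [LinearOrder α] (d : α) {l : List α} {x : α} (hx : x ∈ l) :
    WithTop.untopD d l.minimum ≤ x := by
  have h := List.minimum_le_of_mem' hx
  cases hm : l.minimum with
  | top => rw [hm] at h; exact absurd h (by simp)
  | coe M => rw [hm] at h; simpa [hm] using h

theorem le_min_untop' {α : Type*} [LinearOrder α] (d : α) {l : List α} {c : α}
    (hne : l ≠ []) (h : ∀ x ∈ l, c ≤ x) : c ≤ WithTop.untopD d l.minimum := by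
  have h2 : (c : WithTop α) ≤ l.minimum := List.le_minimum_of_forall_le (by exact_mod_cast h)
  cases hm : l.minimum with
  | top => exact absurd (List.minimum_eq_top.mp hm) hne
  | coe M => rw [hm] at h2; simpa [hm] using h2

theorem mem_attach_map {β : Type*} {l : List SG} {f : {x // x ∈ l} → β} {y : β} :
    y ∈ l.attach.map f ↔ ∃ x : {x // x ∈ l}, f x = y := by
  simp [List.mem_map]

@[simp] theorem la_mk (a b : ℝ) (ls rs : List SG) : la (mk a b ls rs) = a := rfl
@[simp] theorem ra_mk (a b : ℝ) (ls rs : List SG) : ra (mk a b ls rs) = b := rfl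
@[simp] theorem L_mk (a b : ℝ) (ls rs : List SG) : L (mk a b ls rs) = ls := rfl
@[simp] theorem R_mk (a b : ℝ) (ls rs : List SG) : R (mk a b ls rs) = rs := rfl

theorem Ls_eq_of_nil {g : SG} (h : g.L = []) : g.Ls = g.la := by
  cases g with
  | mk a b ls rs => simp at h; subst h; simp [Ls, stops_def]

theorem Rs_eq_of_nil {g : SG} (h : g.R = []) : g.Rs = g.ra := by
  cases g with
  | mk a b ls rs => simp at h; subst h; simp [Rs, stops_def]

theorem le_Ls {g x : SG} (hx : x ∈ g.L) : x.Rs ≤ g.Ls := by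
  cases g with
  | mk a b ls rs =>
    simp at hx
    have hne : ls ≠ [] := by rintro rfl; simp at hx
    rw [Ls, stops_def]
    simp only [List.isEmpty_iff, hne, if_neg]
    exact le_max_unbot' 0 (mem_attach_map.mpr ⟨⟨x, hx⟩, rfl⟩)

theorem Ls_le {g : SG} (hne : g.L ≠ []) {c : ℝ} (h : ∀ x ∈ g.L, x.Rs ≤ c) : g.Ls ≤ c := by
  cases g with
  | mk a b ls rs =>
    simp at hne h
    rw [Ls, stops_def]
    simp only [List.isEmpty_iff, hne, if_neg]
    refine max_unbot'_le 0 (by simpa using hne) ?_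
    intro y hy
    obtain ⟨⟨x, hx⟩, rfl⟩ := mem_attach_map.mp hy
    exact h x hx

theorem Rs_le {g x : SG} (hx : x ∈ g.R) : g.Rs ≤ x.Ls := by
  cases g with
  | mk a b ls rs =>
    simp at hx
    have hne : rs ≠ [] := by rintro rfl; simp at hx
    rw [Rs, stops_def]
    simp only [List.isEmpty_iff, hne, if_neg]
    exact min_untop'_le 0 (mem_attach_map.mpr ⟨⟨x, hx⟩, rfl⟩)

theorem le_Rs {g : SG} (hne : g.R ≠ []) {c : ℝ} (h : ∀ x ∈ g.R, c ≤ x.Ls) : c ≤ g.Rs := by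
  cases g with
  | mk a b ls rs =>
    simp at hne h
    rw [Rs, stops_def]
    simp only [List.isEmpty_iff, hne, if_neg]
    refine le_min_untop' 0 (by simpa using hne) ?_
    intro y hy
    obtain ⟨⟨x, hx⟩, rfl⟩ := mem_attach_map.mp hy
    exact h x hx

@[simp] theorem la_add (g h : SG) : (g.add h).la = g.la + h.la := by
  cases g; cases h; rw [add_def]; rfl
@[simp] theorem ra_add (g h : SG) : (g.add h).ra = g.ra + h.ra := by
  cases g; cases h; rw [add_def]; rfl

theorem mem_L_add {g h y : SG} :
    y ∈ (g.add h).L ↔ (∃ g' ∈ g.L, y = g'.add h) ∨ (∃ h' ∈ h.L, y = g.add h') := by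
  cases g; cases h
  rw [add_def]
  simp only [L_mk, List.mem_append, mem_attach_map]
  constructor
  · rintro (⟨⟨x, hx⟩, rfl⟩ | ⟨⟨x, hx⟩, rfl⟩)
    · exact Or.inl ⟨x, by simpa using hx, rfl⟩
    · exact Or.inr ⟨x, by simpa using hx, rfl⟩
  · rintro (⟨x, hx, rfl⟩ | ⟨x, hx, rfl⟩)
    · exact Or.inl ⟨⟨x, by simpa using hx⟩, rfl⟩
    · exact Or.inr ⟨⟨x, by simpa using hx⟩, rfl⟩

theorem mem_R_add {g h y : SG} :
    y ∈ (g.add h).R ↔ (∃ g' ∈ g.R, y = g'.add h) ∨ (∃ h' ∈ h.R, y = g.add h') := by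
  cases g; cases h
  rw [add_def]
  simp only [R_mk, List.mem_append, mem_attach_map]
  constructor
  · rintro (⟨⟨x, hx⟩, rfl⟩ | ⟨⟨x, hx⟩, rfl⟩)
    · exact Or.inl ⟨x, by simpa using hx, rfl⟩
    · exact Or.inr ⟨x, by simpa using hx, rfl⟩
  · rintro (⟨x, hx, rfl⟩ | ⟨x, hx, rfl⟩)
    · exact Or.inl ⟨⟨x, by simpa using hx⟩, rfl⟩
    · exact Or.inr ⟨⟨x, by simpa using hx⟩, rfl⟩

theorem L_add_nil {g h : SG} : (g.add h).L = [] ↔ g.L = [] ∧ h.L = [] := by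
  cases g; cases h; rw [add_def]; simp

theorem R_add_nil {g h : SG} : (g.add h).R = [] ↔ g.R = [] ∧ h.R = [] := by
  cases g; cases h; rw [add_def]; simp

theorem la_mem_atomList {g : SG} (h : g.L = []) : g.la ∈ g.atomList := by
  cases g with
  | mk a b ls rs => simp at h; subst h; rw [atomList_def]; simp

theorem ra_mem_atomList {g : SG} (h : g.R = []) : g.ra ∈ g.atomList := by
  cases g with
  | mk a b ls rs => simp at h; subst h; rw [atomList_def]; simp

theorem atomList_subset_L {g x : SG} (hx : x ∈ g.L) {s : ℝ} (hs : s ∈ x.atomList) :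
    s ∈ g.atomList := by
  cases g with
  | mk a b ls rs =>
    simp at hx
    have hne : ¬ls.isEmpty := by simp; rintro rfl; simp at hx
    rw [atomList_def, if_neg hne]
    refine List.mem_append_left _ (List.mem_flatten.mpr ⟨x.atomList, ?_, hs⟩)
    exact mem_attach_map.mpr ⟨⟨x, hx⟩, rfl⟩

theorem atomList_subset_R {g x : SG} (hx : x ∈ g.R) {s : ℝ} (hs : s ∈ x.atomList) :
    s ∈ g.atomList := by
  cases g with
  | mk a b ls rs =>
    simp at hx
    have hne : ¬rs.isEmpty := by simp; rintro rfl; simp at hx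
    rw [atomList_def, if_neg hne]
    refine List.mem_append_right _ (List.mem_flatten.mpr ⟨x.atomList, ?_, hs⟩)
    exact mem_attach_map.mpr ⟨⟨x, hx⟩, rfl⟩

theorem guaranteed_L {g x : SG} (hg : g.Guaranteed) (hx : x ∈ g.L) : x.Guaranteed := by
  cases g with
  | mk a b ls rs => rw [guaranteed_def] at hg; exact hg.1 x (by simpa using hx)

theorem guaranteed_R {g x : SG} (hg : g.Guaranteed) (hx : x ∈ g.R) : x.Guaranteed := by
  cases g with
  | mk a b ls rs => rw [guaranteed_def] at hg; exact hg.2.1 x (by simpa using hx)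

theorem guaranteed_la {g : SG} (hg : g.Guaranteed) (h : g.L = []) :
    ∀ s ∈ g.atomList, g.la ≤ s := by
  cases g with
  | mk a b ls rs => rw [guaranteed_def] at hg; exact hg.2.2.1 (by simpa using h)

theorem guaranteed_ra {g : SG} (hg : g.Guaranteed) (h : g.R = []) :
    ∀ s ∈ g.atomList, s ≤ g.ra := by
  cases g with
  | mk a b ls rs => rw [guaranteed_def] at hg; exact hg.2.2.2 (by simpa using h)

theorem minAtom_le {g : SG} {s : ℝ} (hs : s ∈ g.atomList) : g.minAtom ≤ s :=
  min_untop'_le 0 hs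

theorem le_maxAtom {g : SG} {s : ℝ} (hs : s ∈ g.atomList) : s ≤ g.maxAtom :=
  le_max_unbot' 0 hs

theorem birthday_L {g x : SG} (hx : x ∈ g.L) : x.birthday < g.birthday := by
  cases g with
  | mk a b ls rs =>
    simp at hx
    rw [birthday_def]
    have : x.birthday + 1 ≤ WithBot.unbotD 0 (ls.attach.map (fun x => birthday x.1 + 1)).maximum :=
      le_max_unbot' 0 (mem_attach_map.mpr ⟨⟨x, hx⟩, rfl⟩)
    omega

theorem birthday_R {g x : SG} (hx : x ∈ g.R) : x.birthday < g.birthday := by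
  cases g with
  | mk a b ls rs =>
    simp at hx
    rw [birthday_def]
    have : x.birthday + 1 ≤ WithBot.unbotD 0 (rs.attach.map (fun x => birthday x.1 + 1)).maximum :=
      le_max_unbot' 0 (mem_attach_map.mpr ⟨⟨x, hx⟩, rfl⟩)
    omega

theorem sizeOf_L_lt {g x : SG} (hx : x ∈ g.L) : sizeOf x < sizeOf g := by
  cases g with
  | mk a b ls rs =>
    simp at hx
    have := sizeOf_lt_of_mem hx
    simp only [SG.mk.sizeOf_spec]; omega

theorem sizeOf_R_lt {g x : SG} (hx : x ∈ g.R) : sizeOf x < sizeOf g := by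
  cases g with
  | mk a b ls rs =>
    simp at hx
    have := sizeOf_lt_of_mem hx
    simp only [SG.mk.sizeOf_spec]; omega

theorem atomList_ne_nil (g : SG) : g.atomList ≠ [] := by
  cases g with
  | mk a b ls rs =>
    rw [atomList_def]
    by_cases hr : rs.isEmpty
    · rw [if_pos hr]; simp
    · rw [if_neg hr]
      have hrs : rs ≠ [] := by simpa using hr
      obtain ⟨x, hx⟩ := List.exists_mem_of_ne_nil rs hrs
      have hx' : x.atomList ≠ [] := atomList_ne_nil x
      intro hc
      rw [List.append_eq_nil_iff] at hc
      exact hx' (List.flatten_eq_nil_iff.mp hc.2 _ (mem_attach_map.mpr ⟨⟨x, hx⟩, rfl⟩))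
termination_by sizeOf g
decreasing_by simp only [SG.mk.sizeOf_spec]; have := sizeOf_lt_of_mem hx; omega
theorem lb_aux (m1 m2 : ℝ) : ∀ N, ∀ G X : SG, sizeOf G + sizeOf X ≤ N →
    (∀ s ∈ G.atomList, m1 ≤ s) → (∀ s ∈ X.atomList, m2 ≤ s) →
    m1 + m2 ≤ (G.add X).Ls ∧ m1 + m2 ≤ (G.add X).Rs := by
  intro N
  induction N with
  | zero => intro G X h _ _; cases G; simp only [SG.mk.sizeOf_spec] at h; omega
  | succ N ih =>
    intro G X hN h1 h2
    constructor
    · by_cases hL : (G.add X).L = []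
      · rw [Ls_eq_of_nil hL, la_add]
        obtain ⟨hGL, hXL⟩ := L_add_nil.mp hL
        exact add_le_add (h1 _ (la_mem_atomList hGL)) (h2 _ (la_mem_atomList hXL))
      · obtain ⟨y, hy⟩ := List.exists_mem_of_ne_nil _ hL
        refine le_trans ?_ (le_Ls hy)
        rcases mem_L_add.mp hy with ⟨g', hg', rfl⟩ | ⟨x', hx', rfl⟩
        · exact (ih g' X (by have := sizeOf_L_lt hg'; omega)
            (fun s hs => h1 s (atomList_subset_L hg' hs)) h2).2
        · exact (ih G x' (by have := sizeOf_L_lt hx'; omega)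
            h1 (fun s hs => h2 s (atomList_subset_L hx' hs))).2
    · by_cases hR : (G.add X).R = []
      · rw [Rs_eq_of_nil hR, ra_add]
        obtain ⟨hGR, hXR⟩ := R_add_nil.mp hR
        exact add_le_add (h1 _ (ra_mem_atomList hGR)) (h2 _ (ra_mem_atomList hXR))
      · refine le_Rs hR ?_
        intro y hy
        rcases mem_R_add.mp hy with ⟨g', hg', rfl⟩ | ⟨x', hx', rfl⟩
        · exact (ih g' X (by have := sizeOf_R_lt hg'; omega)
            (fun s hs => h1 s (atomList_subset_R hg' hs)) h2).1
        · exact (ih G x' (by have := sizeOf_R_lt hx'; omega)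
            h1 (fun s hs => h2 s (atomList_subset_R hx' hs))).1

theorem lb {m1 m2 : ℝ} {G X : SG}
    (h1 : ∀ s ∈ G.atomList, m1 ≤ s) (h2 : ∀ s ∈ X.atomList, m2 ≤ s) :
    m1 + m2 ≤ (G.add X).Ls ∧ m1 + m2 ≤ (G.add X).Rs :=
  lb_aux m1 m2 _ G X le_rfl h1 h2

theorem ub_aux (m1 m2 : ℝ) : ∀ N, ∀ G X : SG, sizeOf G + sizeOf X ≤ N →
    (∀ s ∈ G.atomList, s ≤ m1) → (∀ s ∈ X.atomList, s ≤ m2) →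
    (G.add X).Ls ≤ m1 + m2 ∧ (G.add X).Rs ≤ m1 + m2 := by
  intro N
  induction N with
  | zero => intro G X h _ _; cases G; simp only [SG.mk.sizeOf_spec] at h; omega
  | succ N ih =>
    intro G X hN h1 h2
    constructor
    · by_cases hL : (G.add X).L = []
      · rw [Ls_eq_of_nil hL, la_add]
        obtain ⟨hGL, hXL⟩ := L_add_nil.mp hL
        exact add_le_add (h1 _ (la_mem_atomList hGL)) (h2 _ (la_mem_atomList hXL))
      · refine Ls_le hL ?_
        intro y hy
        rcases mem_L_add.mp hy with ⟨g', hg', rfl⟩ | ⟨x', hx', rfl⟩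
        · exact (ih g' X (by have := sizeOf_L_lt hg'; omega)
            (fun s hs => h1 s (atomList_subset_L hg' hs)) h2).2
        · exact (ih G x' (by have := sizeOf_L_lt hx'; omega)
            h1 (fun s hs => h2 s (atomList_subset_L hx' hs))).2
    · by_cases hR : (G.add X).R = []
      · rw [Rs_eq_of_nil hR, ra_add]
        obtain ⟨hGR, hXR⟩ := R_add_nil.mp hR
        exact add_le_add (h1 _ (ra_mem_atomList hGR)) (h2 _ (ra_mem_atomList hXR))
      · obtain ⟨y, hy⟩ := List.exists_mem_of_ne_nil _ hR
        refine le_trans (Rs_le hy) ?_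
        rcases mem_R_add.mp hy with ⟨g', hg', rfl⟩ | ⟨x', hx', rfl⟩
        · exact (ih g' X (by have := sizeOf_R_lt hg'; omega)
            (fun s hs => h1 s (atomList_subset_R hg' hs)) h2).1
        · exact (ih G x' (by have := sizeOf_R_lt hx'; omega)
            h1 (fun s hs => h2 s (atomList_subset_R hx' hs))).1

theorem ub {m1 m2 : ℝ} {G X : SG}
    (h1 : ∀ s ∈ G.atomList, s ≤ m1) (h2 : ∀ s ∈ X.atomList, s ≤ m2) :
    (G.add X).Ls ≤ m1 + m2 ∧ (G.add X).Rs ≤ m1 + m2 :=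
  ub_aux m1 m2 _ G X le_rfl h1 h2

@[simp] theorem la_subst (v : ℝ) (g : SG) : (subst v g).la = v := by
  cases g; rw [subst_def]; rfl
@[simp] theorem ra_subst (v : ℝ) (g : SG) : (subst v g).ra = v := by
  cases g; rw [subst_def]; rfl

theorem mem_L_subst {v : ℝ} {g y : SG} :
    y ∈ (subst v g).L ↔ ∃ x ∈ g.L, y = subst v x := by
  cases g
  rw [subst_def]
  simp only [L_mk, mem_attach_map]
  constructor
  · rintro ⟨⟨x, hx⟩, rfl⟩; exact ⟨x, by simpa using hx, rfl⟩
  · rintro ⟨x, hx, rfl⟩; exact ⟨⟨x, by simpa using hx⟩, rfl⟩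

theorem mem_R_subst {v : ℝ} {g y : SG} :
    y ∈ (subst v g).R ↔ ∃ x ∈ g.R, y = subst v x := by
  cases g
  rw [subst_def]
  simp only [R_mk, mem_attach_map]
  constructor
  · rintro ⟨⟨x, hx⟩, rfl⟩; exact ⟨x, by simpa using hx, rfl⟩
  · rintro ⟨x, hx, rfl⟩; exact ⟨⟨x, by simpa using hx⟩, rfl⟩

theorem L_subst_nil {v : ℝ} {g : SG} : (subst v g).L = [] ↔ g.L = [] := by
  cases g; rw [subst_def]; simp

theorem R_subst_nil {v : ℝ} {g : SG} : (subst v g).R = [] ↔ g.R = [] := by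
  cases g; rw [subst_def]; simp

theorem monoLow (m : ℝ) : ∀ N, ∀ G X : SG, sizeOf G + sizeOf X ≤ N →
    (∀ s ∈ G.atomList, m ≤ s) →
    ((subst m G).add X).Ls ≤ (G.add X).Ls ∧ ((subst m G).add X).Rs ≤ (G.add X).Rs := by
  intro N
  induction N with
  | zero => intro G X h _; cases G; simp only [SG.mk.sizeOf_spec] at h; omega
  | succ N ih =>
    intro G X hN h1
    constructor
    · by_cases hL : (G.add X).L = []
      · obtain ⟨hGL, hXL⟩ := L_add_nil.mp hL
        have hL' : ((subst m G).add X).L = [] :=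
          L_add_nil.mpr ⟨L_subst_nil.mpr hGL, hXL⟩
        rw [Ls_eq_of_nil hL, Ls_eq_of_nil hL', la_add, la_add, la_subst]
        exact add_le_add_left (h1 _ (la_mem_atomList hGL)) _
      · have hL' : ((subst m G).add X).L ≠ [] := by
          rw [Ne, L_add_nil, L_subst_nil, ← L_add_nil]; exact hL
        refine Ls_le hL' ?_
        intro y hy
        rcases mem_L_add.mp hy with ⟨g'', hg'', rfl⟩ | ⟨x', hx', rfl⟩
        · obtain ⟨g', hg', rfl⟩ := mem_L_subst.mp hg''
          refine le_trans (ih g' X (by have := sizeOf_L_lt hg'; omega)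
            (fun s hs => h1 s (atomList_subset_L hg' hs))).2 ?_
          exact le_Ls (mem_L_add.mpr (Or.inl ⟨g', hg', rfl⟩))
        · refine le_trans (ih G x' (by have := sizeOf_L_lt hx'; omega) h1).2 ?_
          exact le_Ls (mem_L_add.mpr (Or.inr ⟨x', hx', rfl⟩))
    · by_cases hR : (G.add X).R = []
      · obtain ⟨hGR, hXR⟩ := R_add_nil.mp hR
        have hR' : ((subst m G).add X).R = [] :=
          R_add_nil.mpr ⟨R_subst_nil.mpr hGR, hXR⟩
        rw [Rs_eq_of_nil hR, Rs_eq_of_nil hR', ra_add, ra_add, ra_subst]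
        exact add_le_add_left (h1 _ (ra_mem_atomList hGR)) _
      · refine le_Rs hR ?_
        intro y hy
        rcases mem_R_add.mp hy with ⟨g', hg', rfl⟩ | ⟨x', hx', rfl⟩
        · refine le_trans (Rs_le (mem_R_add.mpr (Or.inl ⟨subst m g', mem_R_subst.mpr ⟨g', hg', rfl⟩, rfl⟩))) ?_
          exact (ih g' X (by have := sizeOf_R_lt hg'; omega)
            (fun s hs => h1 s (atomList_subset_R hg' hs))).1
        · refine le_trans (Rs_le (mem_R_add.mpr (Or.inr ⟨x', hx', rfl⟩))) ?_
          exact (ih G x' (by have := sizeOf_R_lt hx'; omega) h1).1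

theorem monoHigh (m : ℝ) : ∀ N, ∀ G X : SG, sizeOf G + sizeOf X ≤ N →
    (∀ s ∈ G.atomList, s ≤ m) →
    (G.add X).Ls ≤ ((subst m G).add X).Ls ∧ (G.add X).Rs ≤ ((subst m G).add X).Rs := by
  intro N
  induction N with
  | zero => intro G X h _; cases G; simp only [SG.mk.sizeOf_spec] at h; omega
  | succ N ih =>
    intro G X hN h1
    constructor
    · by_cases hL : (G.add X).L = []
      · obtain ⟨hGL, hXL⟩ := L_add_nil.mp hL
        have hL' : ((subst m G).add X).L = [] :=
          L_add_nil.mpr ⟨L_subst_nil.mpr hGL, hXL⟩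
        rw [Ls_eq_of_nil hL, Ls_eq_of_nil hL', la_add, la_add, la_subst]
        exact add_le_add_left (h1 _ (la_mem_atomList hGL)) _
      · refine Ls_le hL ?_
        intro y hy
        rcases mem_L_add.mp hy with ⟨g', hg', rfl⟩ | ⟨x', hx', rfl⟩
        · refine le_trans (ih g' X (by have := sizeOf_L_lt hg'; omega)
            (fun s hs => h1 s (atomList_subset_L hg' hs))).2 ?_
          exact le_Ls (mem_L_add.mpr (Or.inl ⟨subst m g', mem_L_subst.mpr ⟨g', hg', rfl⟩, rfl⟩))
        · refine le_trans (ih G x' (by have := sizeOf_L_lt hx'; omega) h1).2 ?_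
          exact le_Ls (mem_L_add.mpr (Or.inr ⟨x', hx', rfl⟩))
    · by_cases hR : (G.add X).R = []
      · obtain ⟨hGR, hXR⟩ := R_add_nil.mp hR
        have hR' : ((subst m G).add X).R = [] :=
          R_add_nil.mpr ⟨R_subst_nil.mpr hGR, hXR⟩
        rw [Rs_eq_of_nil hR, Rs_eq_of_nil hR', ra_add, ra_add, ra_subst]
        exact add_le_add_left (h1 _ (ra_mem_atomList hGR)) _
      · have hR' : ((subst m G).add X).R ≠ [] := by
          rw [Ne, R_add_nil, R_subst_nil, ← R_add_nil]; exact hR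
        refine le_Rs hR' ?_
        intro y hy
        rcases mem_R_add.mp hy with ⟨g'', hg'', rfl⟩ | ⟨x', hx', rfl⟩
        · obtain ⟨g', hg', rfl⟩ := mem_R_subst.mp hg''
          refine le_trans (Rs_le (mem_R_add.mpr (Or.inl ⟨g', hg', rfl⟩))) ?_
          exact (ih g' X (by have := sizeOf_R_lt hg'; omega)
            (fun s hs => h1 s (atomList_subset_R hg' hs))).1
        · refine le_trans (Rs_le (mem_R_add.mpr (Or.inr ⟨x', hx', rfl⟩))) ?_
          exact (ih G x' (by have := sizeOf_R_lt hx'; omega) h1).1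

def tlow (m : ℝ) : ℕ → SG
  | 0 => mk m m [] []
  | k+1 => mk m m [] [tlow m k]

def thigh (m : ℝ) : ℕ → SG
  | 0 => mk m m [] []
  | k+1 => mk m m [thigh m k] []

@[simp] theorem la_tlow (m : ℝ) (k : ℕ) : (tlow m k).la = m := by cases k <;> rfl
@[simp] theorem ra_tlow (m : ℝ) (k : ℕ) : (tlow m k).ra = m := by cases k <;> rfl
@[simp] theorem L_tlow (m : ℝ) (k : ℕ) : (tlow m k).L = [] := by cases k <;> rfl
@[simp] theorem R_tlow_zero (m : ℝ) : (tlow m 0).R = [] := rfl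
@[simp] theorem R_tlow_succ (m : ℝ) (k : ℕ) : (tlow m (k+1)).R = [tlow m k] := rfl

@[simp] theorem la_thigh (m : ℝ) (k : ℕ) : (thigh m k).la = m := by cases k <;> rfl
@[simp] theorem ra_thigh (m : ℝ) (k : ℕ) : (thigh m k).ra = m := by cases k <;> rfl
@[simp] theorem R_thigh (m : ℝ) (k : ℕ) : (thigh m k).R = [] := by cases k <;> rfl
@[simp] theorem L_thigh_zero (m : ℝ) : (thigh m 0).L = [] := rfl
@[simp] theorem L_thigh_succ (m : ℝ) (k : ℕ) : (thigh m (k+1)).L = [thigh m k] := rfl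

theorem tlow_eq (m : ℝ) : ∀ k, (num m).add ((wait k).conj) = tlow m k := by
  intro k
  induction k with
  | zero =>
    show (num m).add ((mk 0 0 [] []).conj) = _
    rw [conj]
    simp only [List.attach_nil, List.map_nil]
    rw [num, add_def]
    simp [tlow]
  | succ k ih =>
    show (num m).add ((mk 0 0 [wait k] []).conj) = _
    rw [conj]
    simp only [List.attach_nil, List.map_nil, List.attach_cons, List.map_cons]
    rw [num, add_def]
    simp only [List.attach_nil, List.map_nil, List.attach_cons, List.map_cons, List.map_map]
    rw [tlow]
    simp only [List.nil_append]
    congr 1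
    · ring
    · ring
    · simpa [num] using ih

theorem thigh_eq (m : ℝ) : ∀ k, (num m).add (wait k) = thigh m k := by
  intro k
  induction k with
  | zero =>
    show (num m).add (mk 0 0 [] []) = _
    rw [num, add_def]
    simp [thigh]
  | succ k ih =>
    show (num m).add (mk 0 0 [wait k] []) = _
    rw [num, add_def]
    simp only [List.attach_nil, List.map_nil, List.attach_cons, List.map_cons, List.map_map]
    rw [thigh]
    simp only [List.nil_append]
    congr 1
    · ring
    · ring
    · simpa [num] using ih

theorem atomList_tlow (m : ℝ) : ∀ k, ∀ s ∈ (tlow m k).atomList, s = m := by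
  intro k
  induction k with
  | zero => intro s hs; rw [tlow, atomList_def] at hs; simpa using hs
  | succ k ih =>
    intro s hs
    rw [tlow, atomList_def] at hs
    simp at hs
    rcases hs with h | h
    · first | exact h | exact ih s h
    · first | exact h | exact ih s h

theorem atomList_thigh (m : ℝ) : ∀ k, ∀ s ∈ (thigh m k).atomList, s = m := by
  intro k
  induction k with
  | zero => intro s hs; rw [thigh, atomList_def] at hs; simpa using hs
  | succ k ih =>
    intro s hs
    rw [thigh, atomList_def] at hs
    simp at hs
    rcases hs with h | h
    · first | exact h | exact ih s h
    · first | exact h | exact ih s h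

theorem guaranteed_tlow (m : ℝ) : ∀ k, (tlow m k).Guaranteed := by
  intro k
  induction k with
  | zero =>
    rw [tlow, guaranteed_def]
    refine ⟨by simp, by simp, ?_, ?_⟩
    · intro _ s hs
      have := atomList_tlow m 0 s (by rw [tlow]; exact hs)
      exact ge_of_eq this
    · intro _ s hs
      have := atomList_tlow m 0 s (by rw [tlow]; exact hs)
      exact le_of_eq this
  | succ k ih =>
    rw [tlow, guaranteed_def]
    refine ⟨by simp, by simpa using ih, ?_, by simp⟩
    intro _ s hs
    have := atomList_tlow m (k+1) s (by rw [tlow]; exact hs)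
    exact ge_of_eq this

theorem guaranteed_thigh (m : ℝ) : ∀ k, (thigh m k).Guaranteed := by
  intro k
  induction k with
  | zero =>
    rw [thigh, guaranteed_def]
    refine ⟨by simp, by simp, ?_, ?_⟩
    · intro _ s hs
      have := atomList_thigh m 0 s (by rw [thigh]; exact hs)
      exact ge_of_eq this
    · intro _ s hs
      have := atomList_thigh m 0 s (by rw [thigh]; exact hs)
      exact le_of_eq this
  | succ k ih =>
    rw [thigh, guaranteed_def]
    refine ⟨by simpa using ih, by simp, by simp, ?_⟩
    intro _ s hs
    have := atomList_thigh m (k+1) s (by rw [thigh]; exact hs)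
    exact le_of_eq this

theorem projLow (m : ℝ) : ∀ N, ∀ (G X : SG) (k : ℕ), sizeOf G + sizeOf X ≤ N →
    G.Guaranteed → X.Guaranteed → (∀ s ∈ G.atomList, m ≤ s) → G.birthday ≤ k →
    ((tlow m k).add X).Ls ≤ (G.add X).Ls ∧ ((tlow m k).add X).Rs ≤ (G.add X).Rs := by
  intro N
  induction N with
  | zero => intro G X k h _ _ _ _; cases G; simp only [SG.mk.sizeOf_spec] at h; omega
  | succ N ih =>
    intro G X k hN hG hX h1 hk
    constructor
    · -- Ls part
      by_cases hXL : X.L = []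
      · have hTL : ((tlow m k).add X).L = [] := L_add_nil.mpr ⟨L_tlow m k, hXL⟩
        rw [Ls_eq_of_nil hTL, la_add, la_tlow]
        by_cases hGL : G.L = []
        · rw [Ls_eq_of_nil (L_add_nil.mpr ⟨hGL, hXL⟩), la_add]
          exact add_le_add_left (h1 _ (la_mem_atomList hGL)) _
        · obtain ⟨g', hg'⟩ := List.exists_mem_of_ne_nil _ hGL
          refine le_trans ?_ (le_Ls (mem_L_add.mpr (Or.inl ⟨g', hg', rfl⟩)))
          exact (lb (fun s hs => h1 s (atomList_subset_L hg' hs))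
            (guaranteed_la hX hXL)).2
      · have hTL : ((tlow m k).add X).L ≠ [] := by
          rw [Ne, L_add_nil]; rintro ⟨-, h⟩; exact hXL h
        refine Ls_le hTL ?_
        intro y hy
        rcases mem_L_add.mp hy with ⟨g'', hg'', rfl⟩ | ⟨x', hx', rfl⟩
        · rw [L_tlow] at hg''; exact absurd hg'' List.not_mem_nil
        · refine le_trans (ih G x' k (by have := sizeOf_L_lt hx'; omega)
            hG (guaranteed_L hX hx') h1 hk).2 ?_
          exact le_Ls (mem_L_add.mpr (Or.inr ⟨x', hx', rfl⟩))
    · -- Rs part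
      by_cases hR : (G.add X).R = []
      · obtain ⟨hGR, hXR⟩ := R_add_nil.mp hR
        rw [Rs_eq_of_nil hR, ra_add]
        have hm : m ≤ G.ra := h1 _ (ra_mem_atomList hGR)
        cases k with
        | zero =>
          rw [Rs_eq_of_nil (R_add_nil.mpr ⟨R_tlow_zero m, hXR⟩), ra_add, ra_tlow]
          exact add_le_add_left hm _
        | succ k' =>
          refine le_trans (Rs_le (mem_R_add.mpr
            (Or.inl ⟨tlow m k', by simp, rfl⟩))) ?_
          refine le_trans (ub (fun s hs => le_of_eq (atomList_tlow m k' s hs))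
            (guaranteed_ra hX hXR)).1 ?_
          exact add_le_add_left hm _
      · refine le_Rs hR ?_
        intro y hy
        rcases mem_R_add.mp hy with ⟨g', hg', rfl⟩ | ⟨x', hx', rfl⟩
        · have hb : g'.birthday < k := lt_of_lt_of_le (birthday_R hg') hk
          cases k with
          | zero => omega
          | succ k' =>
            refine le_trans (Rs_le (mem_R_add.mpr (Or.inl ⟨tlow m k', by simp, rfl⟩))) ?_
            exact (ih g' X k' (by have := sizeOf_R_lt hg'; omega)
              (guaranteed_R hG hg') hX
              (fun s hs => h1 s (atomList_subset_R hg' hs)) (by omega)).1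
        · refine le_trans (Rs_le (mem_R_add.mpr (Or.inr ⟨x', hx', rfl⟩))) ?_
          exact (ih G x' k (by have := sizeOf_R_lt hx'; omega)
            hG (guaranteed_R hX hx') h1 hk).1

theorem projHigh (m : ℝ) : ∀ N, ∀ (G X : SG) (k : ℕ), sizeOf G + sizeOf X ≤ N →
    G.Guaranteed → X.Guaranteed → (∀ s ∈ G.atomList, s ≤ m) → G.birthday ≤ k →
    (G.add X).Ls ≤ ((thigh m k).add X).Ls ∧ (G.add X).Rs ≤ ((thigh m k).add X).Rs := by
  intro N
  induction N with
  | zero => intro G X k h _ _ _ _; cases G; simp only [SG.mk.sizeOf_spec] at h; omega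
  | succ N ih =>
    intro G X k hN hG hX h1 hk
    constructor
    · -- Ls part
      by_cases hL : (G.add X).L = []
      · obtain ⟨hGL, hXL⟩ := L_add_nil.mp hL
        rw [Ls_eq_of_nil hL, la_add]
        have hm : G.la ≤ m := h1 _ (la_mem_atomList hGL)
        cases k with
        | zero =>
          rw [Ls_eq_of_nil (L_add_nil.mpr ⟨L_thigh_zero m, hXL⟩), la_add, la_thigh]
          exact add_le_add_left hm _
        | succ k' =>
          refine le_trans ?_ (le_Ls (mem_L_add.mpr (Or.inl ⟨thigh m k', by simp, rfl⟩)))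
          refine le_trans (add_le_add_left hm _) ?_
          exact (lb (fun s hs => ge_of_eq (atomList_thigh m k' s hs))
            (guaranteed_la hX hXL)).2
      · refine Ls_le hL ?_
        intro y hy
        rcases mem_L_add.mp hy with ⟨g', hg', rfl⟩ | ⟨x', hx', rfl⟩
        · have hb : g'.birthday < k := lt_of_lt_of_le (birthday_L hg') hk
          cases k with
          | zero => omega
          | succ k' =>
            refine le_trans ?_ (le_Ls (mem_L_add.mpr (Or.inl ⟨thigh m k', by simp, rfl⟩)))
            exact (ih g' X k' (by have := sizeOf_L_lt hg'; omega)
              (guaranteed_L hG hg') hX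
              (fun s hs => h1 s (atomList_subset_L hg' hs)) (by omega)).2
        · refine le_trans ?_ (le_Ls (mem_L_add.mpr (Or.inr ⟨x', hx', rfl⟩)))
          exact (ih G x' k (by have := sizeOf_L_lt hx'; omega)
            hG (guaranteed_L hX hx') h1 hk).2
    · -- Rs part
      by_cases hXR : X.R = []
      · have hTR : ((thigh m k).add X).R = [] := R_add_nil.mpr ⟨R_thigh m k, hXR⟩
        rw [Rs_eq_of_nil hTR, ra_add, ra_thigh]
        by_cases hGR : G.R = []
        · rw [Rs_eq_of_nil (R_add_nil.mpr ⟨hGR, hXR⟩), ra_add]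
          exact add_le_add_left (h1 _ (ra_mem_atomList hGR)) _
        · obtain ⟨g', hg'⟩ := List.exists_mem_of_ne_nil _ hGR
          refine le_trans (Rs_le (mem_R_add.mpr (Or.inl ⟨g', hg', rfl⟩))) ?_
          exact (ub (fun s hs => h1 s (atomList_subset_R hg' hs))
            (guaranteed_ra hX hXR)).1
      · have hTR : ((thigh m k).add X).R ≠ [] := by
          rw [Ne, R_add_nil]; rintro ⟨-, h⟩; exact hXR h
        refine le_Rs hTR ?_
        intro y hy
        rcases mem_R_add.mp hy with ⟨g'', hg'', rfl⟩ | ⟨x', hx', rfl⟩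
        · rw [R_thigh] at hg''; exact absurd hg'' List.not_mem_nil
        · refine le_trans (Rs_le (mem_R_add.mpr (Or.inr ⟨x', hx', rfl⟩))) ?_
          exact (ih G x' k (by have := sizeOf_R_lt hx'; omega)
            hG (guaranteed_R hX hx') h1 hk).1

/-- Projection Theorem: `G_min ≼ G ≼ G_max` and
`min(G) - n̂ ≼ G ≼ max(G) + n̂` where `n = b(G)`. -/
theorem projection (G : SG) (hG : G.Guaranteed) :
    (G.Ge (G.subst G.minAtom) ∧ (G.subst G.maxAtom).Ge G) ∧
    (G.Ge ((num G.minAtom).add (wait G.birthday).conj) ∧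
      ((num G.maxAtom).add (wait G.birthday)).Ge G) := by
  refine ⟨⟨?_, ?_⟩, ?_, ?_⟩
  · intro X hX
    have h := monoLow G.minAtom _ G X le_rfl (fun s hs => minAtom_le hs)
    exact ⟨h.1, h.2⟩
  · intro X hX
    have h := monoHigh G.maxAtom _ G X le_rfl (fun s hs => le_maxAtom hs)
    exact ⟨h.1, h.2⟩
  · intro X hX
    rw [tlow_eq]
    have h := projLow G.minAtom _ G X G.birthday le_rfl hG hX
      (fun s hs => minAtom_le hs) le_rfl
    exact ⟨h.1, h.2⟩
  · intro X hX
    rw [thigh_eq]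
    have h := projHigh G.maxAtom _ G X G.birthday le_rfl hG hX
      (fun s hs => le_maxAtom hs) le_rfl
    exact ⟨h.1, h.2⟩

end SG
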